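/- Let B = [0,N1] × [0,N2] with N1, N2 > 0, let ℓ > 0, let Z ⊆ B be a zone, and let Q be a packing with every rectangle of Q contained in Z and of width at least 2ℓ. Let G be the conflict graph of Q and let C ⊆ Q be an st-separator in G. Set ℓ' = ℓ²/N1. Then the ℓ-rounded versions of the rectangles of Q ∖ C (width w replaced by ℓ'·⌈w/ℓ'⌉, height unchanged) can be packed inside the rounded zone ↔Z⟨ℓ⟩ = (⋃_{(x,y)∈Z} [x−ℓ, x+ℓ] × {y}) ∩ ([0, N1] × [0, N2]). -/

import Mathlib

/-- A placed axis-parallel rectangle `[x, x+w] × [y, y+h]`. -/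
structure PRect where
  x : ℝ
  y : ℝ
  w : ℝ
  h : ℝ

namespace PRect

/-- The rectangle as a subset of the plane. -/
def toSet (R : PRect) : Set (ℝ × ℝ) :=
  Set.Icc R.x (R.x + R.w) ×ˢ Set.Icc R.y (R.y + R.h)

/-- The (open) interior of a placed rectangle. -/
def inter (R : PRect) : Set (ℝ × ℝ) :=
  Set.Ioo R.x (R.x + R.w) ×ˢ Set.Ioo R.y (R.y + R.h)

/-- Two placed rectangles overlap if their interiors intersect. -/
def Overlap (R R' : PRect) : Prop := (R.inter ∩ R'.inter).Nonempty

/-- The rectangle has positive width and height. -/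
def Proper (R : PRect) : Prop := 0 < R.w ∧ 0 < R.h

/-- The left side `{x} × [y, y+h]`. -/
def leftSide (R : PRect) : Set (ℝ × ℝ) := {R.x} ×ˢ Set.Icc R.y (R.y + R.h)

/-- The right side `{x+w} × [y, y+h]`. -/
def rightSide (R : PRect) : Set (ℝ × ℝ) := {R.x + R.w} ×ˢ Set.Icc R.y (R.y + R.h)

/-- The bottom side `[x, x+w] × {y}`. -/
def bottomSide (R : PRect) : Set (ℝ × ℝ) := Set.Icc R.x (R.x + R.w) ×ˢ {R.y}

/-- The top side `[x, x+w] × {y+h}`. -/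
def topSide (R : PRect) : Set (ℝ × ℝ) := Set.Icc R.x (R.x + R.w) ×ˢ {R.y + R.h}

end PRect

/-- The box `[0, N1] × [0, N2]`. -/
def box (N1 N2 : ℝ) : Set (ℝ × ℝ) := Set.Icc 0 N1 ×ˢ Set.Icc 0 N2

/-- The placed rectangle `[-1, 0] × [0, N2]` associated with the left side of the box. -/
def Rleft (N2 : ℝ) : PRect := ⟨-1, 0, 1, N2⟩

/-- The placed rectangle `[N1, N1+1] × [0, N2]` associated with the right side of the box. -/
def Rright (N1 N2 : ℝ) : PRect := ⟨N1, 0, 1, N2⟩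

/-- `R` sees `R'` from the left: `x(R) + w(R) ≤ x(R')` and there is a height `yy`,
strictly inside the vertical extents of both `R` and `R'`, such that the horizontal
segment `[x(R)+w(R), x(R')] × {yy}` is disjoint from every rectangle of the
packing `Q` other than `R` and `R'`. -/
def SeesDir (Q : Set PRect) (R R' : PRect) : Prop :=
  R.x + R.w ≤ R'.x ∧ ∃ yy : ℝ,
    R.y < yy ∧ yy < R.y + R.h ∧ R'.y < yy ∧ yy < R'.y + R'.h ∧
    ∀ T ∈ Q, T ≠ R → T ≠ R' →
      ∀ xx : ℝ, R.x + R.w ≤ xx → xx ≤ R'.x → (xx, yy) ∉ T.toSet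

/-- Two distinct placed rectangles see each other (in the packing `Q`). -/
def Sees (Q : Set PRect) (R R' : PRect) : Prop :=
  R ≠ R' ∧ (SeesDir Q R R' ∨ SeesDir Q R' R)

/-- Adjacency in the conflict graph of the packing `Q` inside `[0,N1] × [0,N2]`:
the vertices are the rectangles of `Q` together with `Rleft N2` (the vertex `s`) and
`Rright N1 N2` (the vertex `t`); two vertices are adjacent iff they see each other,
except that the left and right sides are not adjacent to each other. -/
def ConflictAdj (N1 N2 : ℝ) (Q : Set PRect) (u v : PRect) : Prop :=
  u ∈ Q ∪ {Rleft N2, Rright N1 N2} ∧ v ∈ Q ∪ {Rleft N2, Rright N1 N2} ∧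
  ¬ (u ∈ ({Rleft N2, Rright N1 N2} : Set PRect) ∧
     v ∈ ({Rleft N2, Rright N1 N2} : Set PRect)) ∧
  Sees Q u v

/-- The center of a placed rectangle. In particular the center of `Rleft N2` is
`(-1/2, N2/2)` and the center of `Rright N1 N2` is `(N1 + 1/2, N2/2)`. -/
noncomputable def PRect.center (R : PRect) : ℝ × ℝ := (R.x + R.w / 2, R.y + R.h / 2)

/-- `C` is an `st`-separator in the conflict graph of `Q`: `C ⊆ Q` and every path from
`s = Rleft N2` to `t = Rright N1 N2` in the conflict graph contains a vertex of `C`. -/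
def IsSTSeparator (N1 N2 : ℝ) (Q : Set PRect) (C : Set PRect) : Prop :=
  C ⊆ Q ∧
  ∀ (n : ℕ) (v : Fin (n + 1) → PRect),
    Function.Injective v →
    v 0 = Rleft N2 → v (Fin.last n) = Rright N1 N2 →
    (∀ i : Fin n, ConflictAdj N1 N2 Q (v i.castSucc) (v i.succ)) →
    ∃ i, v i ∈ C

/-- The negatively shifted zone `←Z⟨ℓ⟩ = (⋃_{(x,y)∈Z} [x−ℓ,x] × {y}) ∩ ([0,N1−ℓ] × [0,N2])`. -/
def shiftNeg (Z : Set (ℝ × ℝ)) (ℓ N1 N2 : ℝ) : Set (ℝ × ℝ) :=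
  {p | ∃ x : ℝ, (x, p.2) ∈ Z ∧ x - ℓ ≤ p.1 ∧ p.1 ≤ x} ∩
    (Set.Icc 0 (N1 - ℓ) ×ˢ Set.Icc 0 N2)

/-- The positively shifted zone `→Z⟨ℓ⟩ = (⋃_{(x,y)∈Z} [x,x+ℓ] × {y}) ∩ ([0,N1] × [0,N2])`. -/
def shiftPos (Z : Set (ℝ × ℝ)) (ℓ N1 N2 : ℝ) : Set (ℝ × ℝ) :=
  {p | ∃ x : ℝ, (x, p.2) ∈ Z ∧ x ≤ p.1 ∧ p.1 ≤ x + ℓ} ∩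
    (Set.Icc 0 N1 ×ˢ Set.Icc 0 N2)

/-- The rounded zone `↔Z⟨ℓ⟩ = (⋃_{(x,y)∈Z} [x−ℓ,x+ℓ] × {y}) ∩ ([0,N1] × [0,N2])`. -/
def shiftBoth (Z : Set (ℝ × ℝ)) (ℓ N1 N2 : ℝ) : Set (ℝ × ℝ) :=
  {p | ∃ x : ℝ, (x, p.2) ∈ Z ∧ x - ℓ ≤ p.1 ∧ p.1 ≤ x + ℓ} ∩
    (Set.Icc 0 N1 ×ˢ Set.Icc 0 N2)

/-- The family of rectangles indexed by `F`, where the member indexed by `R ∈ F` has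
width `dw R` and height `dh R`, can be packed inside the zone `Z`: there is an
assignment of pairwise non-overlapping placed rectangles of these dimensions, each
contained in `Z`. -/
def CanPackDims (F : Set PRect) (dw dh : PRect → ℝ) (Z : Set (ℝ × ℝ)) : Prop :=
  ∃ f : PRect → PRect,
    (∀ R ∈ F, (f R).w = dw R ∧ (f R).h = dh R ∧ (f R).toSet ⊆ Z) ∧
    ∀ R ∈ F, ∀ R' ∈ F, R ≠ R' → ¬ (f R).Overlap (f R')

section RoundedPackingAux

open Set

lemma RP.sees_symm {Q : Set PRect} {R R' : PRect} (h : Sees Q R R') : Sees Q R' R :=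
  ⟨h.1.symm, h.2.symm⟩

lemma RP.conflictAdj_symm {N1 N2 : ℝ} {Q : Set PRect} {u v : PRect}
    (h : ConflictAdj N1 N2 Q u v) : ConflictAdj N1 N2 Q v u :=
  ⟨h.2.1, h.1, fun hh => h.2.2.1 ⟨hh.2, hh.1⟩, RP.sees_symm h.2.2.2⟩

/-- The conflict graph as a simple graph. -/
def RP.CG (N1 N2 : ℝ) (Q : Set PRect) : SimpleGraph PRect where
  Adj u v := ConflictAdj N1 N2 Q u v
  symm := ⟨fun _ _ h => RP.conflictAdj_symm h⟩
  loopless := ⟨fun _ h => h.2.2.2.1 rfl⟩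

lemma RP.getVert_support_get {G : SimpleGraph PRect} {u v : PRect} (p : G.Walk u v) :
    ∀ (i : ℕ) (h : i < p.support.length), p.getVert i = p.support.get ⟨i, h⟩ := by
  induction p with
  | nil =>
    intro i h
    cases i with
    | zero => rfl
    | succ n => simp [SimpleGraph.Walk.support_nil] at h
  | cons hadj q ih =>
    intro i h
    cases i with
    | zero => rfl
    | succ n =>
      rw [SimpleGraph.Walk.getVert_cons_succ]
      have h' : n < q.support.length := by
        simpa [SimpleGraph.Walk.support_cons] using h
      rw [ih n h']
      simp [SimpleGraph.Walk.support_cons]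

lemma RP.no_walk {N1 N2 : ℝ} {Q C : Set PRect}
    (hsep : IsSTSeparator N1 N2 Q C) (hC : C ⊆ Q)
    (hsQ : Rleft N2 ∉ Q)
    (W : (RP.CG N1 N2 Q).Walk (Rleft N2) (Rright N1 N2))
    (hW : ∀ u ∈ W.support, u ∉ C) : False := by
  classical
  set P := W.bypass with hP
  have hpath : P.IsPath := SimpleGraph.Walk.bypass_isPath W
  have hsub : P.support ⊆ W.support := SimpleGraph.Walk.support_bypass_subset W
  set n := P.length with hn
  set v : Fin (n + 1) → PRect := fun i => P.getVert i with hv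
  have hlen : P.support.length = n + 1 := P.length_support
  have hinj : Function.Injective v := by
    intro i j hij
    have h1 : (i : ℕ) < P.support.length := by rw [hlen]; exact i.2
    have h2 : (j : ℕ) < P.support.length := by rw [hlen]; exact j.2
    rw [hv] at hij
    simp only [RP.getVert_support_get P _ h1, RP.getVert_support_get P _ h2] at hij
    have h3 := (List.nodup_iff_injective_get.mp hpath.support_nodup) hij
    have h4 : (i : ℕ) = (j : ℕ) := by simpa using h3
    exact Fin.ext h4
  have h0 : v 0 = Rleft N2 := P.getVert_zero
  have hlast : v (Fin.last n) = Rright N1 N2 := by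
    show P.getVert n = _
    exact P.getVert_length
  have hadj : ∀ i : Fin n, ConflictAdj N1 N2 Q (v i.castSucc) (v i.succ) := by
    intro i
    have := P.adj_getVert_succ (i := i) (by exact i.2)
    exact this
  obtain ⟨i, hiC⟩ := hsep.2 n v hinj h0 hlast hadj
  have : v i ∈ P.support := by
    have h1 : (i : ℕ) < P.support.length := by rw [hlen]; exact i.2
    rw [hv]; simp only [RP.getVert_support_get P _ h1]
    exact List.get_mem _ _
  exact hW _ (hsub this) hiC

end RoundedPackingAux
section RoundedPackingGeo

open Set

lemma RP.mem_toSet {R : PRect} {p : ℝ × ℝ} :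
    p ∈ R.toSet ↔ (R.x ≤ p.1 ∧ p.1 ≤ R.x + R.w) ∧ (R.y ≤ p.2 ∧ p.2 ≤ R.y + R.h) :=
  Iff.rfl

lemma RP.mem_inter {R : PRect} {p : ℝ × ℝ} :
    p ∈ R.inter ↔ (R.x < p.1 ∧ p.1 < R.x + R.w) ∧ (R.y < p.2 ∧ p.2 < R.y + R.h) :=
  Iff.rfl

lemma RP.overlap_mk {T R : PRect} {a b : ℝ}
    (h1 : T.x < a) (h2 : a < T.x + T.w) (h3 : T.y < b) (h4 : b < T.y + T.h)
    (h5 : R.x < a) (h6 : a < R.x + R.w) (h7 : R.y < b) (h8 : b < R.y + R.h) :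
    T.Overlap R :=
  ⟨(a, b), RP.mem_inter.mpr ⟨⟨h1, h2⟩, h3, h4⟩, RP.mem_inter.mpr ⟨⟨h5, h6⟩, h7, h8⟩⟩

lemma RP.bounds_of_box {N1 N2 : ℝ} {R : PRect} (hp : R.Proper) (hb : R.toSet ⊆ box N1 N2) :
    0 ≤ R.x ∧ R.x + R.w ≤ N1 ∧ 0 ≤ R.y ∧ R.y + R.h ≤ N2 := by
  obtain ⟨hw, hh⟩ := hp
  have h1 : (R.x, R.y) ∈ R.toSet :=
    ⟨⟨le_refl _, le_add_of_nonneg_right hw.le⟩, le_refl _, le_add_of_nonneg_right hh.le⟩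
  have h2 : (R.x + R.w, R.y + R.h) ∈ R.toSet :=
    ⟨⟨le_add_of_nonneg_right hw.le, le_refl _⟩, le_add_of_nonneg_right hh.le, le_refl _⟩
  have hb1 := hb h1
  have hb2 := hb h2
  simp only [box, Set.mem_prod, Set.mem_Icc] at hb1 hb2
  exact ⟨hb1.1.1, hb2.1.2, hb1.2.1, hb2.2.2⟩

lemma RP.exists_good_y (Q : Set PRect) (hfin : Q.Finite) {lo hi : ℝ} (hlo : lo < hi) :
    ∃ yy, lo < yy ∧ yy < hi ∧ ∀ T ∈ Q, yy ≠ T.y ∧ yy ≠ T.y + T.h := by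
  have hbad : ((fun T : PRect => T.y) '' Q ∪ (fun T : PRect => T.y + T.h) '' Q).Finite :=
    (hfin.image _).union (hfin.image _)
  have hIoo : (Set.Ioo lo hi).Infinite := Set.Ioo_infinite hlo
  obtain ⟨yy, hyy⟩ := (hIoo.diff hbad).nonempty
  refine ⟨yy, hyy.1.1, hyy.1.2, fun T hT => ⟨?_, ?_⟩⟩
  · intro he; exact hyy.2 (Or.inl ⟨T, hT, he.symm⟩)
  · intro he; exact hyy.2 (Or.inr ⟨T, hT, he.symm⟩)

/-- Corridor lemma between two rectangles of the packing: if they vertically overlap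
and the horizontal gap between them is `< 2ℓ`, they see each other. -/
lemma RP.seesDir_of_close {ℓ : ℝ} (hℓ : 0 < ℓ) {Q : Set PRect}
    (hproper : ∀ R ∈ Q, R.Proper)
    (hpack : ∀ R ∈ Q, ∀ R' ∈ Q, R ≠ R' → ¬ R.Overlap R')
    (hwidth : ∀ R ∈ Q, 2 * ℓ ≤ R.w)
    (hfin : Q.Finite)
    {R R' : PRect} (hR : R ∈ Q) (hR' : R' ∈ Q)
    (horder : R.x + R.w ≤ R'.x) (hclose : R'.x < R.x + R.w + 2 * ℓ)
    {lo hi : ℝ} (hlo : lo < hi)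
    (hsub1 : R.y ≤ lo) (hsub2 : hi ≤ R.y + R.h)
    (hsub3 : R'.y ≤ lo) (hsub4 : hi ≤ R'.y + R'.h) :
    SeesDir Q R R' := by
  obtain ⟨yy, hy1, hy2, hgood⟩ := RP.exists_good_y Q hfin hlo
  refine ⟨horder, yy, by linarith, by linarith, by linarith, by linarith, ?_⟩
  intro T hT hTR hTR' xx hxx1 hxx2 hmem
  have hm := RP.mem_toSet.mp hmem
  have hTy : T.y < yy := lt_of_le_of_ne hm.2.1 (Ne.symm (hgood T hT).1)
  have hTy2 : yy < T.y + T.h := lt_of_le_of_ne hm.2.2 (hgood T hT).2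
  have hwR : 0 < R.w := (hproper R hR).1
  have hwR' : 0 < R'.w := (hproper R' hR').1
  by_cases hcase1 : T.x < R.x + R.w
  · set xm := (max T.x R.x + (R.x + R.w)) / 2 with hxm
    have h1 : max T.x R.x < R.x + R.w := max_lt hcase1 (by linarith)
    have hxm1 : max T.x R.x < xm := by rw [hxm]; linarith
    have hxm2 : xm < R.x + R.w := by rw [hxm]; linarith
    exact hpack T hT R hR hTR
      (RP.overlap_mk (lt_of_le_of_lt (le_max_left _ _) hxm1)
        (by linarith [hm.1.2]) hTy hTy2
        (lt_of_le_of_lt (le_max_right _ _) hxm1) hxm2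
        (by linarith) (by linarith))
  · push_neg at hcase1
    by_cases hcase2 : R'.x < T.x + T.w
    · set xm := (R'.x + min (T.x + T.w) (R'.x + R'.w)) / 2 with hxm
      have h1 : R'.x < min (T.x + T.w) (R'.x + R'.w) := lt_min hcase2 (by linarith)
      have hxm1 : R'.x < xm := by rw [hxm]; linarith
      have hxm2 : xm < min (T.x + T.w) (R'.x + R'.w) := by rw [hxm]; linarith
      exact hpack T hT R' hR' hTR'
        (RP.overlap_mk (by linarith [hm.1.1]) (lt_of_lt_of_le hxm2 (min_le_left _ _))
          hTy hTy2 hxm1 (lt_of_lt_of_le hxm2 (min_le_right _ _))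
          (by linarith) (by linarith))
    · push_neg at hcase2
      have := hwidth T hT
      linarith

/-- If a rectangle of the packing is at distance `< 2ℓ` from the right wall, it sees it. -/
lemma RP.seesDir_wall_right {N1 N2 ℓ : ℝ} (hℓ : 0 < ℓ) {Q : Set PRect}
    (hproper : ∀ R ∈ Q, R.Proper)
    (hpack : ∀ R ∈ Q, ∀ R' ∈ Q, R ≠ R' → ¬ R.Overlap R')
    (hbox : ∀ R ∈ Q, R.toSet ⊆ box N1 N2)
    (hwidth : ∀ R ∈ Q, 2 * ℓ ≤ R.w)
    (hfin : Q.Finite)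
    {R : PRect} (hR : R ∈ Q) (hclose : N1 < R.x + R.w + 2 * ℓ) :
    SeesDir Q R (Rright N1 N2) := by
  obtain ⟨hx0, hxN, hy0, hyN⟩ := RP.bounds_of_box (hproper R hR) (hbox R hR)
  have hwR : 0 < R.w := (hproper R hR).1
  have hhR : 0 < R.h := (hproper R hR).2
  obtain ⟨yy, hy1, hy2, hgood⟩ := RP.exists_good_y Q hfin (show R.y < R.y + R.h by linarith)
  refine ⟨hxN, yy, hy1, hy2, ?_, ?_, ?_⟩
  · show (0 : ℝ) < yy; linarith
  · show yy < 0 + N2; linarith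
  intro T hT hTR _ xx hxx1 hxx2 hmem
  have hm := RP.mem_toSet.mp hmem
  have hTy : T.y < yy := lt_of_le_of_ne hm.2.1 (Ne.symm (hgood T hT).1)
  have hTy2 : yy < T.y + T.h := lt_of_le_of_ne hm.2.2 (hgood T hT).2
  have hTbox := RP.bounds_of_box (hproper T hT) (hbox T hT)
  have hxx2' : xx ≤ N1 := hxx2
  by_cases hcase1 : T.x < R.x + R.w
  · set xm := (max T.x R.x + (R.x + R.w)) / 2 with hxm
    have h1 : max T.x R.x < R.x + R.w := max_lt hcase1 (by linarith)
    have hxm1 : max T.x R.x < xm := by rw [hxm]; linarith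
    have hxm2 : xm < R.x + R.w := by rw [hxm]; linarith
    exact hpack T hT R hR hTR
      (RP.overlap_mk (lt_of_le_of_lt (le_max_left _ _) hxm1)
        (by linarith [hm.1.2]) hTy hTy2
        (lt_of_le_of_lt (le_max_right _ _) hxm1) hxm2 hy1 hy2)
  · push_neg at hcase1
    have := hwidth T hT
    have : T.x + T.w ≤ N1 := hTbox.2.1
    linarith [hwidth T hT, hm.1.1, hm.1.2]

/-- If a rectangle of the packing is at distance `< 2ℓ` from the left wall, the left
wall sees it. -/
lemma RP.seesDir_wall_left {N1 N2 ℓ : ℝ} (hℓ : 0 < ℓ) {Q : Set PRect}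
    (hproper : ∀ R ∈ Q, R.Proper)
    (hpack : ∀ R ∈ Q, ∀ R' ∈ Q, R ≠ R' → ¬ R.Overlap R')
    (hbox : ∀ R ∈ Q, R.toSet ⊆ box N1 N2)
    (hwidth : ∀ R ∈ Q, 2 * ℓ ≤ R.w)
    (hfin : Q.Finite)
    {R : PRect} (hR : R ∈ Q) (hclose : R.x < 2 * ℓ) :
    SeesDir Q (Rleft N2) R := by
  obtain ⟨hx0, hxN, hy0, hyN⟩ := RP.bounds_of_box (hproper R hR) (hbox R hR)
  have hwR : 0 < R.w := (hproper R hR).1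
  have hhR : 0 < R.h := (hproper R hR).2
  obtain ⟨yy, hy1, hy2, hgood⟩ := RP.exists_good_y Q hfin (show R.y < R.y + R.h by linarith)
  refine ⟨?_, yy, ?_, ?_, hy1, hy2, ?_⟩
  · show (-1 : ℝ) + 1 ≤ R.x; linarith
  · show (0 : ℝ) < yy; linarith
  · show yy < 0 + N2; linarith
  intro T hT _ hTR xx hxx1 hxx2 hmem
  have hxx1' : (0 : ℝ) ≤ xx := by
    have h : (-1 : ℝ) + 1 ≤ xx := hxx1
    linarith
  have hm := RP.mem_toSet.mp hmem
  have hTy : T.y < yy := lt_of_le_of_ne hm.2.1 (Ne.symm (hgood T hT).1)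
  have hTy2 : yy < T.y + T.h := lt_of_le_of_ne hm.2.2 (hgood T hT).2
  have hTbox := RP.bounds_of_box (hproper T hT) (hbox T hT)
  by_cases hcase1 : R.x < T.x + T.w
  · set xm := (R.x + min (T.x + T.w) (R.x + R.w)) / 2 with hxm
    have h1 : R.x < min (T.x + T.w) (R.x + R.w) := lt_min hcase1 (by linarith)
    have hxm1 : R.x < xm := by rw [hxm]; linarith
    have hxm2 : xm < min (T.x + T.w) (R.x + R.w) := by rw [hxm]; linarith
    exact hpack T hT R hR hTR
      (RP.overlap_mk (by linarith [hm.1.1]) (lt_of_lt_of_le hxm2 (min_le_left _ _))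
        hTy hTy2 hxm1 (lt_of_lt_of_le hxm2 (min_le_right _ _)) hy1 hy2)
  · push_neg at hcase1
    linarith [hwidth T hT, hTbox.1, hm.1.1]

lemma RP.round_bounds {c w : ℝ} (hc : 0 < c) (hw : 0 ≤ w) :
    w ≤ c * ⌈w / c⌉ ∧ c * ⌈w / c⌉ < w + c := by
  have h1 : (w / c : ℝ) ≤ ⌈w / c⌉ := Int.le_ceil _
  have h2 : (⌈w / c⌉ : ℝ) < w / c + 1 := Int.ceil_lt_add_one _
  constructor
  · have := mul_le_mul_of_nonneg_left h1 hc.le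
    rw [mul_div_cancel₀ _ hc.ne'] at this
    linarith
  · have := mul_lt_mul_of_pos_left h2 hc
    rw [mul_add, mul_one, mul_div_cancel₀ _ hc.ne'] at this
    linarith

lemma RP.floor_step {c : ℝ} (hc : 0 < c) {a b : ℝ} (ha : 0 ≤ a) (hab : a + c ≤ b) :
    (⌊a / c⌋₊ : ℝ) + 1 ≤ (⌊b / c⌋₊ : ℝ) := by
  have h1 : a / c + 1 ≤ b / c := by
    rw [div_add' _ _ _ hc.ne', div_le_div_iff₀ hc hc]
    nlinarith
  have h2 : ⌊a / c⌋₊ + 1 = ⌊a / c + 1⌋₊ := (Nat.floor_add_one (by positivity)).symm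
  have h3 : ⌊a / c + 1⌋₊ ≤ ⌊b / c⌋₊ := Nat.floor_mono h1
  have : ⌊a / c⌋₊ + 1 ≤ ⌊b / c⌋₊ := h2 ▸ h3
  exact_mod_cast this

lemma RP.floor_le_bound {c a M : ℝ} (hc : 0 < c) (ha : 0 ≤ a) (haM : a ≤ M) :
    (⌊a / c⌋₊ : ℝ) ≤ M / c := by
  calc (⌊a / c⌋₊ : ℝ) ≤ a / c := Nat.floor_le (by positivity)
    _ ≤ M / c := by gcongr

end RoundedPackingGeo
/-- If `Q` is a packing inside a zone `Z ⊆ B` with all widths at least `2ℓ` and `C` is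
an `st`-separator in the conflict graph of `Q`, then the `ℓ`-rounded versions of the
rectangles of `Q \ C` (width `w` replaced by `ℓ'·⌈w/ℓ'⌉` where `ℓ' = ℓ²/N1`, height
unchanged) can be packed inside the rounded zone `↔Z⟨ℓ⟩`. -/
theorem pack_rounded_in_shiftBoth (N1 N2 ℓ : ℝ) (hN1 : 0 < N1) (hN2 : 0 < N2)
    (hℓ : 0 < ℓ)
    (Z : Set (ℝ × ℝ)) (hZ : Z ⊆ box N1 N2)
    (Q : Set PRect) (hfin : Q.Finite)
    (hproper : ∀ R ∈ Q, R.Proper)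
    (hpack : ∀ R ∈ Q, ∀ R' ∈ Q, R ≠ R' → ¬ R.Overlap R')
    (hin : ∀ R ∈ Q, R.toSet ⊆ Z)
    (hwidth : ∀ R ∈ Q, 2 * ℓ ≤ R.w)
    (C : Set PRect) (hsep : IsSTSeparator N1 N2 Q C) :
    CanPackDims (Q \ C)
      (fun R => (ℓ ^ 2 / N1) * (⌈R.w / (ℓ ^ 2 / N1)⌉ : ℝ))
      (fun R => R.h)
      (shiftBoth Z ℓ N1 N2) := by
  classical
  have hl' : (0:ℝ) < ℓ ^ 2 / N1 := by positivity
  have h2ℓ : (0:ℝ) < 2 * ℓ := by linarith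
  have hbox : ∀ R ∈ Q, R.toSet ⊆ box N1 N2 := fun R hR => (hin R hR).trans hZ
  have hbounds : ∀ R ∈ Q, 0 ≤ R.x ∧ R.x + R.w ≤ N1 ∧ 0 ≤ R.y ∧ R.y + R.h ≤ N2 :=
    fun R hR => RP.bounds_of_box (hproper R hR) (hbox R hR)
  have hsQ : Rleft N2 ∉ Q := by
    intro h
    have h1 : (0:ℝ) ≤ -1 := (hbounds _ h).1
    linarith
  have htQ : Rright N1 N2 ∉ Q := by
    intro h
    have h1 : N1 + 1 ≤ N1 := (hbounds _ h).2.1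
    linarith
  have hC : C ⊆ Q := hsep.1
  have hsC : Rleft N2 ∉ C := fun h => hsQ (hC h)
  have htC : Rright N1 N2 ∉ C := fun h => htQ (hC h)
  have hl'half : ∀ R ∈ Q, ℓ ^ 2 / N1 ≤ ℓ / 2 := by
    intro R hR
    have h1 : 2 * ℓ ≤ R.w := hwidth R hR
    have h2 := (hbounds R hR).1
    have h3 := (hbounds R hR).2.1
    have h4 : 2 * ℓ ≤ N1 := by linarith
    rw [div_le_div_iff₀ hN1 (by norm_num : (0:ℝ) < 2)]
    nlinarith
  have hnotspec : ∀ R ∈ Q, R ∉ ({Rleft N2, Rright N1 N2} : Set PRect) := by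
    intro R hR hmem
    rcases hmem with h | h
    · rw [h] at hR; exact hsQ hR
    · rw [h] at hR; exact htQ hR
  have hadjQQ : ∀ R ∈ Q, ∀ R' ∈ Q, Sees Q R R' → (RP.CG N1 N2 Q).Adj R R' :=
    fun R hR R' hR' hs => ⟨Or.inl hR, Or.inl hR', fun hh => hnotspec R hR hh.1, hs⟩
  have hadjQt : ∀ R ∈ Q, Sees Q R (Rright N1 N2) → (RP.CG N1 N2 Q).Adj R (Rright N1 N2) :=
    fun R hR hs => ⟨Or.inl hR, Or.inr (Set.mem_insert_iff.mpr (Or.inr rfl)),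
      fun hh => hnotspec R hR hh.1, hs⟩
  have hadjsQ : ∀ R ∈ Q, Sees Q (Rleft N2) R → (RP.CG N1 N2 Q).Adj (Rleft N2) R :=
    fun R hR hs => ⟨Or.inr (Set.mem_insert _ _), Or.inl hR,
      fun hh => hnotspec R hR hh.2, hs⟩
  set TS : Set PRect := {R | R ∈ Q ∧ R ∉ C ∧
    ∃ W : (RP.CG N1 N2 Q).Walk R (Rright N1 N2), ∀ u ∈ W.support, u ∉ C} with hTS
  have hclosure : ∀ R, R ∈ Q → R ∉ C → ∀ R', R' ∈ TS → Sees Q R R' → R ∈ TS := by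
    intro R hRQ hRC R' hR'T hsees
    obtain ⟨hR'Q, hR'C, W, hW⟩ := hR'T
    refine ⟨hRQ, hRC, W.cons (hadjQQ R hRQ R' hR'Q hsees), ?_⟩
    intro u hu
    rw [SimpleGraph.Walk.support_cons] at hu
    rcases List.mem_cons.mp hu with h | h
    · rw [h]; exact hRC
    · exact hW u h
  have hwallT : ∀ R, R ∈ Q → R ∉ C → Sees Q R (Rright N1 N2) → R ∈ TS := by
    intro R hRQ hRC hsees
    refine ⟨hRQ, hRC, SimpleGraph.Walk.cons (hadjQt R hRQ hsees) SimpleGraph.Walk.nil, ?_⟩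
    intro u hu
    rw [SimpleGraph.Walk.support_cons] at hu
    rcases List.mem_cons.mp hu with h | h
    · rw [h]; exact hRC
    · have hu' : u = Rright N1 N2 := by
        simpa [SimpleGraph.Walk.support_nil] using h
      rw [hu']; exact htC
  have hSgapR : ∀ R, R ∈ Q → R ∉ C → R ∉ TS → R.x + R.w + 2 * ℓ ≤ N1 := by
    intro R hRQ hRC hRT
    by_contra hcon
    push_neg at hcon
    have hdir := RP.seesDir_wall_right hℓ hproper hpack hbox hwidth hfin hRQ hcon
    have hne : R ≠ Rright N1 N2 := by intro h; rw [h] at hRQ; exact htQ hRQ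
    exact hRT (hwallT R hRQ hRC ⟨hne, Or.inl hdir⟩)
  have hTgapL : ∀ R, R ∈ TS → 2 * ℓ ≤ R.x := by
    intro R hRT
    obtain ⟨hRQ, hRC, W, hW⟩ := hRT
    by_contra hcon
    push_neg at hcon
    have hdir := RP.seesDir_wall_left hℓ hproper hpack hbox hwidth hfin hRQ hcon
    have hne : Rleft N2 ≠ R := by intro h; rw [← h] at hRQ; exact hsQ hRQ
    refine RP.no_walk hsep hC hsQ (W.cons (hadjsQ R hRQ ⟨hne, Or.inl hdir⟩)) ?_
    intro u hu
    rw [SimpleGraph.Walk.support_cons] at hu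
    rcases List.mem_cons.mp hu with h | h
    · rw [h]; exact hsC
    · exact hW u h
  have hcross : ∀ R, R ∈ Q → R ∉ C → R ∉ TS → ∀ R', R' ∈ TS →
      ∀ yc : ℝ, R.y < yc → yc < R.y + R.h → R'.y < yc → yc < R'.y + R'.h →
      R.x + R.w ≤ R'.x → R.x + R.w + 2 * ℓ ≤ R'.x := by
    intro R hRQ hRC hRT R' hR'T yc h1 h2 h3 h4 horder
    by_contra hcon
    push_neg at hcon
    have hR'Q : R' ∈ Q := hR'T.1
    have hlo : max R.y R'.y < min (R.y + R.h) (R'.y + R'.h) :=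
      max_lt (lt_min (by linarith) (by linarith)) (lt_min (by linarith) (by linarith))
    have hdir := RP.seesDir_of_close hℓ hproper hpack hwidth hfin hRQ hR'Q horder hcon hlo
      (le_max_left _ _) (min_le_left _ _) (le_max_right _ _) (min_le_right _ _)
    have hne : R ≠ R' := by
      intro h
      rw [h] at horder
      have := (hproper R' hR'Q).1
      linarith
    exact hRT (hclosure R hRQ hRC R' hR'T ⟨hne, Or.inl hdir⟩)
  -- the shifted placement
  set sL : PRect → ℝ := fun R => (⌊R.x / (2 * ℓ)⌋₊ : ℝ) * (ℓ ^ 2 / N1) with hsL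
  set sRt : PRect → ℝ := fun R => (⌊(N1 - (R.x + R.w)) / (2 * ℓ)⌋₊ : ℝ) * (ℓ ^ 2 / N1) with hsR
  set wr : PRect → ℝ := fun R => (ℓ ^ 2 / N1) * (⌈R.w / (ℓ ^ 2 / N1)⌉ : ℝ) with hwrdef
  set nx : PRect → ℝ := fun R => if R ∈ TS then R.x + R.w - wr R - sRt R else R.x + sL R with hnx
  have hwrb : ∀ R ∈ Q, R.w ≤ wr R ∧ wr R < R.w + ℓ ^ 2 / N1 := by
    intro R hR
    simp only [hwrdef]
    exact RP.round_bounds hl' (le_of_lt (hproper R hR).1)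
  have hsLb : ∀ R ∈ Q, 0 ≤ sL R ∧ sL R ≤ ℓ / 2 := by
    intro R hR
    obtain ⟨hx0, hxN, -, -⟩ := hbounds R hR
    have hw0 : 0 < R.w := (hproper R hR).1
    simp only [hsL]
    constructor
    · positivity
    · have h1 : (⌊R.x / (2 * ℓ)⌋₊ : ℝ) ≤ N1 / (2 * ℓ) :=
        RP.floor_le_bound h2ℓ hx0 (by linarith)
      calc (⌊R.x / (2 * ℓ)⌋₊ : ℝ) * (ℓ ^ 2 / N1) ≤ (N1 / (2 * ℓ)) * (ℓ ^ 2 / N1) :=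
            mul_le_mul_of_nonneg_right h1 hl'.le
        _ = ℓ / 2 := by field_simp
  have hsRb : ∀ R ∈ Q, 0 ≤ sRt R ∧ sRt R ≤ ℓ / 2 := by
    intro R hR
    obtain ⟨hx0, hxN, -, -⟩ := hbounds R hR
    have hw0 : 0 < R.w := (hproper R hR).1
    simp only [hsR]
    constructor
    · positivity
    · have h1 : (⌊(N1 - (R.x + R.w)) / (2 * ℓ)⌋₊ : ℝ) ≤ N1 / (2 * ℓ) :=
        RP.floor_le_bound h2ℓ (by linarith) (by linarith)
      calc (⌊(N1 - (R.x + R.w)) / (2 * ℓ)⌋₊ : ℝ) * (ℓ ^ 2 / N1)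
          ≤ (N1 / (2 * ℓ)) * (ℓ ^ 2 / N1) := mul_le_mul_of_nonneg_right h1 hl'.le
        _ = ℓ / 2 := by field_simp
  have hsLstep : ∀ R R', R ∈ Q → R' ∈ Q → R.x + R.w ≤ R'.x → sL R + ℓ ^ 2 / N1 ≤ sL R' := by
    intro R R' hR hR' h
    have hst := RP.floor_step h2ℓ (hbounds R hR).1
      (show R.x + 2 * ℓ ≤ R'.x by linarith [hwidth R hR])
    simp only [hsL]
    calc (⌊R.x / (2 * ℓ)⌋₊ : ℝ) * (ℓ ^ 2 / N1) + ℓ ^ 2 / N1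
        = ((⌊R.x / (2 * ℓ)⌋₊ : ℝ) + 1) * (ℓ ^ 2 / N1) := by ring
      _ ≤ (⌊R'.x / (2 * ℓ)⌋₊ : ℝ) * (ℓ ^ 2 / N1) :=
          mul_le_mul_of_nonneg_right hst hl'.le
  have hsRstep : ∀ R R', R ∈ Q → R' ∈ Q → R.x + R.w ≤ R'.x →
      sRt R' + ℓ ^ 2 / N1 ≤ sRt R := by
    intro R R' hR hR' h
    have hb' := hbounds R' hR'
    have hst := RP.floor_step h2ℓ (show (0:ℝ) ≤ N1 - (R'.x + R'.w) by linarith [hb'.2.1])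
      (show N1 - (R'.x + R'.w) + 2 * ℓ ≤ N1 - (R.x + R.w) by linarith [hwidth R' hR'])
    simp only [hsR]
    calc (⌊(N1 - (R'.x + R'.w)) / (2 * ℓ)⌋₊ : ℝ) * (ℓ ^ 2 / N1) + ℓ ^ 2 / N1
        = ((⌊(N1 - (R'.x + R'.w)) / (2 * ℓ)⌋₊ : ℝ) + 1) * (ℓ ^ 2 / N1) := by ring
      _ ≤ (⌊(N1 - (R.x + R.w)) / (2 * ℓ)⌋₊ : ℝ) * (ℓ ^ 2 / N1) :=
          mul_le_mul_of_nonneg_right hst hl'.le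
  -- key ordering property
  have hkey : ∀ R, R ∈ Q → R ∉ C → ∀ R', R' ∈ Q → R' ∉ C →
      (∃ yc : ℝ, R.y < yc ∧ yc < R.y + R.h ∧ R'.y < yc ∧ yc < R'.y + R'.h) →
      R.x + R.w ≤ R'.x → nx R + wr R ≤ nx R' := by
    intro R hRQ hRC R' hR'Q hR'C hyc horder
    obtain ⟨yc, hy1, hy2, hy3, hy4⟩ := hyc
    have hwrR := hwrb R hRQ
    have hwrR' := hwrb R' hR'Q
    have hsLR := hsLb R hRQ
    have hsLR' := hsLb R' hR'Q
    have hsRR := hsRb R hRQ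
    have hsRR' := hsRb R' hR'Q
    have hhalf := hl'half R hRQ
    by_cases hT1 : R ∈ TS <;> by_cases hT2 : R' ∈ TS
    · simp only [hnx, if_pos hT1, if_pos hT2]
      linarith [hsRstep R R' hRQ hR'Q horder, hwrR'.2]
    · simp only [hnx, if_pos hT1, if_neg hT2]
      linarith [hsRR.1, hsLR'.1]
    · simp only [hnx, if_neg hT1, if_pos hT2]
      have hgap := hcross R hRQ hRC hT1 R' hT2 yc hy1 hy2 hy3 hy4 horder
      linarith [hsLR.2, hwrR.2, hwrR'.2, hsRR'.2]
    · simp only [hnx, if_neg hT1, if_neg hT2]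
      linarith [hwrR.2, hsLstep R R' hRQ hR'Q horder]
  -- containment
  have hcont : ∀ R, R ∈ Q → R ∉ C →
      (PRect.mk (nx R) R.y (wr R) R.h).toSet ⊆ shiftBoth Z ℓ N1 N2 := by
    intro R hRQ hRC p hp
    have hp' : (nx R ≤ p.1 ∧ p.1 ≤ nx R + wr R) ∧ (R.y ≤ p.2 ∧ p.2 ≤ R.y + R.h) := hp
    obtain ⟨hx0, hxN, hy0, hyN⟩ := hbounds R hRQ
    have hw0 : 0 < R.w := (hproper R hRQ).1
    have hwrR := hwrb R hRQ
    have hhalf := hl'half R hRQ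
    by_cases hT1 : R ∈ TS
    · have hxgap := hTgapL R hT1
      have hsRR := hsRb R hRQ
      have hnxv : nx R = R.x + R.w - wr R - sRt R := by simp only [hnx, if_pos hT1]
      have hple : p.1 ≤ R.x + R.w := by
        have := hp'.1.2
        rw [hnxv] at this
        linarith [hsRR.1]
      have hpge : R.x - ℓ ≤ p.1 := by
        have := hp'.1.1
        rw [hnxv] at this
        linarith [hwrR.2, hsRR.2]
      refine ⟨⟨max p.1 R.x, ?_, ?_, ?_⟩, ⟨?_, ?_⟩, ?_, ?_⟩
      · exact hin R hRQ ⟨⟨le_max_right _ _, max_le hple (by linarith)⟩, hp'.2⟩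
      · have h1 : max p.1 R.x ≤ p.1 + ℓ := max_le (by linarith) (by linarith)
        linarith
      · have h1 : p.1 ≤ max p.1 R.x := le_max_left _ _
        linarith
      · linarith
      · linarith
      · exact le_trans hy0 hp'.2.1
      · exact le_trans hp'.2.2 hyN
    · have hxgap := hSgapR R hRQ hRC hT1
      have hsLR := hsLb R hRQ
      have hnxv : nx R = R.x + sL R := by simp only [hnx, if_neg hT1]
      have hpge : R.x ≤ p.1 := by
        have := hp'.1.1
        rw [hnxv] at this
        linarith [hsLR.1]
      have hple : p.1 ≤ R.x + R.w + ℓ := by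
        have := hp'.1.2
        rw [hnxv] at this
        linarith [hsLR.2, hwrR.2]
      refine ⟨⟨min p.1 (R.x + R.w), ?_, ?_, ?_⟩, ⟨?_, ?_⟩, ?_, ?_⟩
      · exact hin R hRQ ⟨⟨le_min hpge (by linarith), min_le_right _ _⟩, hp'.2⟩
      · have h1 : min p.1 (R.x + R.w) ≤ p.1 := min_le_left _ _
        linarith
      · have h1 : p.1 - ℓ ≤ min p.1 (R.x + R.w) := le_min (by linarith) (by linarith)
        linarith
      · linarith
      · linarith
      · exact le_trans hy0 hp'.2.1
      · exact le_trans hp'.2.2 hyN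
  -- trichotomy
  have htri : ∀ R, R ∈ Q → ∀ R', R' ∈ Q → R ≠ R' →
      ∀ yc : ℝ, R.y < yc → yc < R.y + R.h → R'.y < yc → yc < R'.y + R'.h →
      R.x + R.w ≤ R'.x ∨ R'.x + R'.w ≤ R.x := by
    intro R hRQ R' hR'Q hne yc h1 h2 h3 h4
    by_contra hcon
    push_neg at hcon
    apply hpack R hRQ R' hR'Q hne
    have hw0 : 0 < R.w := (hproper R hRQ).1
    have hw0' : 0 < R'.w := (hproper R' hR'Q).1
    set xm := (max R.x R'.x + min (R.x + R.w) (R'.x + R'.w)) / 2 with hxm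
    have hmm : max R.x R'.x < min (R.x + R.w) (R'.x + R'.w) :=
      max_lt (lt_min (by linarith) (by linarith [hcon.2]))
        (lt_min (by linarith [hcon.1]) (by linarith))
    have hxm1 : max R.x R'.x < xm := by rw [hxm]; linarith
    have hxm2 : xm < min (R.x + R.w) (R'.x + R'.w) := by rw [hxm]; linarith
    exact RP.overlap_mk (lt_of_le_of_lt (le_max_left _ _) hxm1)
      (lt_of_lt_of_le hxm2 (min_le_left _ _)) h1 h2
      (lt_of_le_of_lt (le_max_right _ _) hxm1)
      (lt_of_lt_of_le hxm2 (min_le_right _ _)) h3 h4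
  -- assemble
  refine ⟨fun R => PRect.mk (nx R) R.y (wr R) R.h, ?_, ?_⟩
  · intro R hR
    exact ⟨rfl, rfl, hcont R hR.1 hR.2⟩
  · intro R hR R' hR' hne hov
    obtain ⟨p, hp1, hp2⟩ := hov
    have hq1 : (nx R < p.1 ∧ p.1 < nx R + wr R) ∧ (R.y < p.2 ∧ p.2 < R.y + R.h) := hp1
    have hq2 : (nx R' < p.1 ∧ p.1 < nx R' + wr R') ∧ (R'.y < p.2 ∧ p.2 < R'.y + R'.h) := hp2
    rcases htri R hR.1 R' hR'.1 hne p.2 hq1.2.1 hq1.2.2 hq2.2.1 hq2.2.2 with h | h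
    · have := hkey R hR.1 hR.2 R' hR'.1 hR'.2
        ⟨p.2, hq1.2.1, hq1.2.2, hq2.2.1, hq2.2.2⟩ h
      linarith [hq1.1.2, hq2.1.1]
    · have := hkey R' hR'.1 hR'.2 R hR.1 hR.2
        ⟨p.2, hq2.2.1, hq2.2.2, hq1.2.1, hq1.2.2⟩ h
      linarith [hq2.1.2, hq1.1.1]
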